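/- The potential V_L(r) = r^{-2}(1 − 2M/r), viewed as a function of the tortoise coordinate r*, satisfies: 2V_L + r* · dV_L/dr* ≤ 0 outside a compact set of r* values. Equivalently, t·(2V_L + r* V_L') is bounded above by t times a nonnegative compactly supported function. -/

import Mathlib

/-- The potential `V_L = r^{-2}(1 − 2M/r)` as a function of the tortoise coordinate
`r*` (where `r = r(r*)` solves `dr/dr* = 1 − 2M/r`, `r(0) = 3M`) satisfies
`2V_L + r*·V_L' ≤ 0` outside a compact set of `r*` values; equivalently,
`t·(2V_L + r* V_L')` is bounded above by `t` times a nonnegative compactly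
supported function. -/
theorem potential_trapping_term_nonpositive_outside_compact
    (M : ℝ) (hM : 0 < M) (r : ℝ → ℝ)
    (hr : ∀ s, 2 * M < r s)
    (hode : ∀ s, HasDerivAt r (1 - 2 * M / r s) s)
    (hr0 : r 0 = 3 * M) :
    (∃ R > 0, ∀ s : ℝ, R ≤ |s| →
      2 * ((1 - 2 * M / r s) / (r s) ^ 2)
        + s * deriv (fun x => (1 - 2 * M / r x) / (r x) ^ 2) s ≤ 0) ∧
    (∃ χ : ℝ → ℝ, (∀ s, 0 ≤ χ s) ∧ HasCompactSupport χ ∧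
      ∀ t s : ℝ, 0 ≤ t →
        t * (2 * ((1 - 2 * M / r s) / (r s) ^ 2)
          + s * deriv (fun x => (1 - 2 * M / r x) / (r x) ^ 2) s) ≤ t * χ s) := by
  have hrpos : ∀ s, 0 < r s := fun s => lt_trans (by linarith) (hr s)
  have hrne : ∀ s, r s ≠ 0 := fun s => ne_of_gt (hrpos s)
  have hA : ∀ s, 0 < 1 - 2 * M / r s := by
    intro s
    have h1 : 2 * M / r s < 1 := (div_lt_one (hrpos s)).mpr (hr s)
    linarith
  -- derivative of the potential
  have hderiv : ∀ s, HasDerivAt (fun x => (1 - 2 * M / r x) / (r x) ^ 2)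
      ((6 * M - 2 * r s) / (r s) ^ 4 * (1 - 2 * M / r s)) s := by
    intro s
    have heq : (fun x => (1 - 2 * M / r x) / (r x) ^ 2)
        = fun x => (r x - 2 * M) / (r x) ^ 3 := by
      funext x
      have := hrne x
      field_simp
    rw [heq]
    have hnum : HasDerivAt (fun x => r x - 2 * M) (1 - 2 * M / r s) s :=
      (hode s).sub_const _
    have hden : HasDerivAt (fun x => (r x) ^ 3)
        ((3 : ℕ) * (r s) ^ 2 * (1 - 2 * M / r s)) s := (hode s).pow 3
    have h := hnum.div hden (pow_ne_zero 3 (hrne s))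
    convert h using 1 <;> try rfl
    have := hrne s
    field_simp
    ring_nf
  -- the exact implicit solution
  have hlog : ∀ s, r s - 3 * M + 2 * M * Real.log (r s - 2 * M)
      - 2 * M * Real.log M = s := by
    set g : ℝ → ℝ := fun s => r s - 3 * M + 2 * M * Real.log (r s - 2 * M)
      - 2 * M * Real.log M - s with hg_def
    have hg : ∀ s, HasDerivAt g 0 s := by
      intro s
      have hx2 : (0:ℝ) < r s - 2 * M := by linarith [hr s]
      have h2 : HasDerivAt (fun x => Real.log (r x - 2 * M))
          ((1 - 2 * M / r s) / (r s - 2 * M)) s :=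
        ((hode s).sub_const _).log (ne_of_gt hx2)
      have h3 := (((hode s).sub_const (3 * M)).add (h2.const_mul (2 * M))).sub_const
        (2 * M * Real.log M)
      have h4 := h3.sub (hasDerivAt_id s)
      convert h4 using 1 <;> try rfl
      have hx := hrne s
      have hx2' := ne_of_gt hx2
      field_simp
      ring
    have hc : ∀ s, g s = g 0 := fun s =>
      is_const_of_deriv_eq_zero (fun x => (hg x).differentiableAt)
        (fun x => (hg x).deriv) s 0
    intro s
    have h0 : g 0 = 0 := by
      simp only [hg_def, hr0]
      have : 3 * M - 2 * M = M := by ring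
      rw [this]
      ring
    have := hc s
    rw [h0] at this
    simpa [hg_def, sub_eq_zero] using this
  -- monotonicity
  have hmono : StrictMono r := by
    apply strictMono_of_deriv_pos
    intro x
    rw [(hode x).deriv]
    exact hA x
  -- lower bound for s ≥ 0 : r s ≥ 3M + s/3
  have hlow : ∀ s : ℝ, 0 ≤ s → 3 * M + s / 3 ≤ r s := by
    intro s hs
    have hge3 : ∀ x : ℝ, 0 ≤ x → 3 * M ≤ r x := by
      intro x hx
      calc 3 * M = r 0 := hr0.symm
        _ ≤ r x := hmono.monotone hx
    have hmono2 : MonotoneOn (fun x => r x - x / 3) (Set.Ici (0:ℝ)) := by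
      apply monotoneOn_of_deriv_nonneg (convex_Ici 0)
      · have hdiff : Differentiable ℝ (fun x => r x - x / 3) := fun x =>
          ((hode x).sub ((hasDerivAt_id x).div_const 3)).differentiableAt
        exact hdiff.continuous.continuousOn
      · intro x _
        exact (((hode x).sub ((hasDerivAt_id x).div_const 3)).differentiableAt).differentiableWithinAt
      · intro x hx
        rw [interior_Ici] at hx
        have hd : HasDerivAt (fun x => r x - x / 3) ((1 - 2 * M / r x) - 1/3) x :=
          (hode x).sub ((hasDerivAt_id x).div_const 3)
        rw [hd.deriv]
        have h3 : 3 * M ≤ r x := hge3 x (le_of_lt hx)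
        have : 2 * M / r x ≤ 2 / 3 := by
          rw [div_le_div_iff₀ (hrpos x) (by norm_num)]
          linarith
        linarith
    have := hmono2 (Set.self_mem_Ici) hs hs
    simp only [hr0] at this
    linarith [this]
  -- the key inequality
  have key : ∀ s : ℝ, 162 * M ≤ |s| → (r s) ^ 2 - s * (r s - 3 * M) ≤ 0 := by
    intro s hs
    have hid := hlog s
    rcases le_or_gt (162 * M) s with hpos | hneg
    · -- positive side
      have hx : 57 * M ≤ r s := by
        have := hlow s (by linarith)
        linarith
      have hL : 4 ≤ Real.log (r s - 2 * M) - Real.log M := by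
        have h55 : 55 * M ≤ r s - 2 * M := by linarith
        rw [← Real.log_div (ne_of_gt (by linarith [hr s] : r s - 2*M > 0)) (ne_of_gt hM)]
        rw [Real.le_log_iff_exp_le (div_pos (by linarith) hM)]
        have h1 : Real.exp 4 = (Real.exp 1) ^ 4 := by
          rw [← Real.exp_nat_mul]; norm_num
        have h2 : (Real.exp 1) ^ 4 < 55 := by
          have h := Real.exp_one_lt_d9
          have hp := (Real.exp_pos 1).le
          calc Real.exp 1 ^ 4 = (Real.exp 1 ^ 2) ^ 2 := by ring
            _ ≤ ((2.7182818286:ℝ) ^ 2) ^ 2 := by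
                apply pow_le_pow_left₀ (by positivity)
                nlinarith
            _ < 55 := by norm_num
        have : (55 : ℝ) ≤ (r s - 2 * M) / M := by
          rw [le_div_iff₀ hM]; linarith
        linarith [h1 ▸ h2]
      -- s = (r s - 3M) + 2M (log (r s - 2M) - log M)
      nlinarith [mul_nonneg (mul_nonneg (le_of_lt hM) (by linarith : (0:ℝ) ≤ Real.log (r s - 2*M) - Real.log M - 4)) (by linarith : (0:ℝ) ≤ r s - 3*M)]
    · -- negative side
      have hsneg : s ≤ -(162 * M) := by
        rcases abs_cases s with ⟨h1, _⟩ | ⟨h1, _⟩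
        · linarith
        · linarith
      have hx3 : r s ≤ 3 * M := by
        calc r s ≤ r 0 := hmono.monotone (by linarith)
          _ = 3 * M := hr0
      have hL : Real.log (r s - 2 * M) - Real.log M ≤ -9 := by
        by_contra hcon
        push_neg at hcon
        have h2 := (mul_lt_mul_iff_right₀ (by positivity : (0:ℝ) < 2*M)).mpr hcon
        linarith [hr s, hid, hsneg, hM]
      have hxs : r s - 2 * M ≤ M / 2 := by
        have h1 : Real.log ((r s - 2 * M) / M) ≤ -9 := by
          rw [Real.log_div (ne_of_gt (by linarith [hr s] : r s - 2*M > 0)) (ne_of_gt hM)]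
          linarith
        have h2 : (r s - 2 * M) / M ≤ Real.exp (-9) := by
          rw [← Real.exp_log (show (0:ℝ) < (r s - 2*M)/M by
            apply div_pos _ hM; linarith [hr s])]
          exact Real.exp_le_exp.mpr h1
        have h3 : Real.exp (-9 : ℝ) ≤ 1 / 2 := by
          rw [Real.exp_neg, inv_eq_one_div]
          rw [div_le_div_iff₀ (Real.exp_pos 9) (by norm_num)]
          have : (1:ℝ) + 9 ≤ Real.exp 9 := by
            linarith [Real.add_one_le_exp (9:ℝ)]
          linarith
        have := (div_le_iff₀ hM).mp (le_trans h2 h3)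
        linarith
      nlinarith [mul_nonneg (mul_nonneg (le_of_lt hM)
        (by linarith : (0:ℝ) ≤ -(Real.log (r s - 2*M) - Real.log M) - 9))
        (by linarith : (0:ℝ) ≤ 3*M - r s)]
  -- rewrite the expression
  have hexpr : ∀ s : ℝ,
      2 * ((1 - 2 * M / r s) / (r s) ^ 2)
        + s * deriv (fun x => (1 - 2 * M / r x) / (r x) ^ 2) s
      = 2 * (1 - 2 * M / r s) / (r s) ^ 4 * ((r s) ^ 2 - s * (r s - 3 * M)) := by
    intro s
    rw [(hderiv s).deriv]
    have := hrne s
    field_simp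
    ring
  have hmain : ∀ s : ℝ, 162 * M ≤ |s| →
      2 * ((1 - 2 * M / r s) / (r s) ^ 2)
        + s * deriv (fun x => (1 - 2 * M / r x) / (r x) ^ 2) s ≤ 0 := by
    intro s hs
    rw [hexpr s]
    apply mul_nonpos_of_nonneg_of_nonpos
    · have h1 := hA s
      have h2 : (0:ℝ) < (r s) ^ 4 := pow_pos (hrpos s) 4
      apply div_nonneg (by linarith) h2.le
    · exact key s hs
  refine ⟨⟨162 * M, by linarith, hmain⟩, ?_⟩
  -- the cutoff function
  set E : ℝ → ℝ := fun s =>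
    2 * ((1 - 2 * M / r s) / (r s) ^ 2)
      + s * deriv (fun x => (1 - 2 * M / r x) / (r x) ^ 2) s with hE_def
  refine ⟨fun s => if |s| ≤ 162 * M then max (E s) 0 else 0, ?_, ?_, ?_⟩
  · intro s
    dsimp only
    split
    · exact le_max_right _ _
    · exact le_refl 0
  · apply HasCompactSupport.intro (isCompact_Icc (a := -(162*M)) (b := 162*M))
    intro s hs
    have hns : ¬ |s| ≤ 162 * M := by
      intro h
      rw [abs_le] at h
      simp only [Set.mem_Icc] at hs
      exact hs ⟨h.1, h.2⟩
    simp only [if_neg hns]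
  · intro t s ht
    apply mul_le_mul_of_nonneg_left _ ht
    dsimp only
    split
    · exact le_max_left _ _
    · next h =>
      push_neg at h
      exact hmain s (le_of_lt h)
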